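/- Let μ be a Borel measure on (0,∞), let η < η̃ be real numbers with ∫_{(0,∞)} (1+x)^{-η̃} dμ(x) < ∞, and let y : [0,∞) → ℝ be measurable with y(0)² + ∫_{(0,∞)} y(x)² (1+x)^η dμ(x) < ∞. Then for every t > 0, |y(0) + ∫_{(0,∞)} e^{-tx} y(x) dμ(x)|² ≤ (1 + ∫_{(0,∞)} (1+x)^{-η̃} dμ(x)) · κ(η̃−η)² · (1 + t^{-(η̃−η)}) · (y(0)² + ∫_{(0,∞)} y(x)² (1+x)^η dμ(x)), where κ(δ) = max{1, 2^{-δ/2} δ^{δ/2}}. In particular, for each T > 0 there is a constant C with |g(t)| ≤ C t^{-(η̃−η)/2} for all t ∈ (0,T], where g(t) = y(0) + ∫_{(0,∞)} e^{-tx} y(x) dμ(x). -/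

import Mathlib

open Real MeasureTheory

noncomputable def kappa (δ : ℝ) : ℝ := max 1 ((2 : ℝ) ^ (-(δ / 2)) * δ ^ (δ / 2))

lemma one_le_kappa (δ : ℝ) : 1 ≤ kappa δ := le_max_left _ _

lemma ptwise_core {δ t x : ℝ} (hδ : 0 < δ) (ht : 0 < t) (hx : 0 ≤ x) :
    Real.exp (-(2*t*x)) * (1+x) ^ δ ≤ kappa δ ^ 2 * (1 + t ^ (-δ)) := by
  have h1x : (0:ℝ) < 1 + x := by linarith
  have key : Real.exp (-(2*t*x)) * (1+x) ^ δ ≤ max 1 ((δ/(2*t)) ^ δ) := by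
    rcases le_or_gt δ (2*t) with hle | hlt
    · refine le_trans ?_ (le_max_left _ _)
      have h2 : (1+x) ^ δ ≤ Real.exp (2*t*x) := by
        have hb : 1 + x ≤ Real.exp x := by have := Real.add_one_le_exp x; linarith
        calc (1+x)^δ ≤ (Real.exp x)^δ := Real.rpow_le_rpow h1x.le hb hδ.le
          _ = Real.exp (x * δ) := (Real.exp_mul x δ).symm
          _ ≤ Real.exp (2*t*x) := Real.exp_le_exp.mpr (by nlinarith)
      calc Real.exp (-(2*t*x)) * (1+x)^δ
          ≤ Real.exp (-(2*t*x)) * Real.exp (2*t*x) :=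
            mul_le_mul_of_nonneg_left h2 (Real.exp_pos _).le
        _ = 1 := by rw [← Real.exp_add]; simp
    · refine le_trans ?_ (le_max_right _ _)
      set u := 2*t*(1+x) with hu
      have hupos : 0 < u := by positivity
      have h3 : (u/δ)^δ ≤ Real.exp (u - δ) := by
        rw [Real.rpow_def_of_pos (by positivity)]
        apply Real.exp_le_exp.mpr
        have hlog : Real.log (u/δ) ≤ u/δ - 1 := Real.log_le_sub_one_of_pos (by positivity)
        calc Real.log (u/δ) * δ ≤ (u/δ - 1) * δ := by nlinarith
          _ = u - δ := by field_simp
      have h4 : (1+x)^δ = (u/δ)^δ * (δ/(2*t))^δ := by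
        rw [← Real.mul_rpow (by positivity) (by positivity)]
        congr 1
        field_simp
        ring
      rw [h4, ← mul_assoc]
      have h5 : Real.exp (-(2*t*x)) * (u/δ)^δ ≤ 1 := by
        calc Real.exp (-(2*t*x)) * (u/δ)^δ
            ≤ Real.exp (-(2*t*x)) * Real.exp (u - δ) :=
              mul_le_mul_of_nonneg_left h3 (Real.exp_pos _).le
          _ = Real.exp (2*t - δ) := by rw [← Real.exp_add]; congr 1; rw [hu]; ring
          _ ≤ 1 := Real.exp_le_one_iff.mpr (by linarith)
      calc Real.exp (-(2*t*x)) * (u/δ)^δ * (δ/(2*t))^δ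
          ≤ 1 * (δ/(2*t))^δ :=
            mul_le_mul_of_nonneg_right h5 (Real.rpow_nonneg (by positivity) _)
        _ = (δ/(2*t))^δ := one_mul _
  refine key.trans ?_
  have hk1 : (1:ℝ) ≤ kappa δ ^ 2 := one_le_pow₀ (one_le_kappa δ)
  have htd : 0 ≤ t ^ (-δ) := Real.rpow_nonneg ht.le _
  have hsq : (δ/2)^δ ≤ kappa δ ^ 2 := by
    have e1 : ((2:ℝ)^(-(δ/2)) * δ^(δ/2))^2 = (δ/2)^δ := by
      rw [mul_pow, ← Real.rpow_natCast ((2:ℝ)^(-(δ/2))) 2, ← Real.rpow_natCast (δ^(δ/2)) 2,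
        ← Real.rpow_mul (by norm_num : (0:ℝ) ≤ 2), ← Real.rpow_mul hδ.le]
      push_cast
      have e2 : -(δ/2) * 2 = -δ := by ring
      have e3 : δ/2 * 2 = δ := by ring
      rw [e2, e3, Real.div_rpow hδ.le (by norm_num : (0:ℝ) ≤ 2), Real.rpow_neg (by norm_num : (0:ℝ) ≤ 2)]
      rw [div_eq_mul_inv]
      ring
    calc (δ/2)^δ = ((2:ℝ)^(-(δ/2)) * δ^(δ/2))^2 := e1.symm
      _ ≤ kappa δ ^ 2 := by
          apply pow_le_pow_left₀ (by positivity) (le_max_right _ _)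
  apply max_le
  · nlinarith
  · have e4 : (δ/(2*t))^δ = (δ/2)^δ * t^(-δ) := by
      have : δ/(2*t) = (δ/2) * t⁻¹ := by field_simp
      rw [this, Real.mul_rpow (by positivity) (by positivity),
        Real.inv_rpow ht.le, ← Real.rpow_neg ht.le]
    rw [e4]
    have h6 : (δ/2)^δ * t^(-δ) ≤ kappa δ ^ 2 * t^(-δ) :=
      mul_le_mul_of_nonneg_right hsq htd
    nlinarith

set_option maxHeartbeats 1000000 in
theorem projection_singular_bound (μ : Measure ℝ) (η ηt : ℝ) (hηη : η < ηt)
    (y : ℝ → ℝ) (hy : Measurable y)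
    (hI : IntegrableOn (fun x => (1 + x) ^ (-ηt)) (Set.Ioi 0) μ)
    (hN : IntegrableOn (fun x => y x ^ 2 * (1 + x) ^ η) (Set.Ioi 0) μ) :
    (∀ t : ℝ, 0 < t →
      |y 0 + ∫ x in Set.Ioi 0, Real.exp (-(t * x)) * y x ∂μ| ^ 2 ≤
        (1 + ∫ x in Set.Ioi 0, (1 + x) ^ (-ηt) ∂μ) * kappa (ηt - η) ^ 2 *
          (1 + t ^ (-(ηt - η))) *
          (y 0 ^ 2 + ∫ x in Set.Ioi 0, y x ^ 2 * (1 + x) ^ η ∂μ)) ∧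
    ∀ T : ℝ, 0 < T → ∃ C : ℝ, ∀ t ∈ Set.Ioc (0 : ℝ) T,
      |y 0 + ∫ x in Set.Ioi 0, Real.exp (-(t * x)) * y x ∂μ| ≤
        C * t ^ (-(ηt - η) / 2) := by
  have hδ : 0 < ηt - η := by linarith
  set I : ℝ := ∫ x in Set.Ioi 0, (1 + x) ^ (-ηt) ∂μ with hIdef
  set A : ℝ := ∫ x in Set.Ioi 0, y x ^ 2 * (1 + x) ^ η ∂μ with hAdef
  have hI0 : 0 ≤ I := setIntegral_nonneg measurableSet_Ioi
    (fun x hx => Real.rpow_nonneg (by simp only [Set.mem_Ioi] at hx; linarith) _)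
  have hA0 : 0 ≤ A := setIntegral_nonneg measurableSet_Ioi
    (fun x hx => mul_nonneg (sq_nonneg _)
      (Real.rpow_nonneg (by simp only [Set.mem_Ioi] at hx; linarith) _))
  have hmem : ∀ᵐ x ∂(μ.restrict (Set.Ioi 0)), x ∈ Set.Ioi 0 :=
    ae_restrict_mem measurableSet_Ioi
  have main : ∀ t : ℝ, 0 < t →
      |y 0 + ∫ x in Set.Ioi 0, Real.exp (-(t * x)) * y x ∂μ| ^ 2 ≤
        (1 + I) * kappa (ηt - η) ^ 2 * (1 + t ^ (-(ηt - η))) * (y 0 ^ 2 + A) := by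
    intro t ht
    set K : ℝ := kappa (ηt - η) ^ 2 * (1 + t ^ (-(ηt - η))) with hKdef
    have hκ1 : (1:ℝ) ≤ kappa (ηt - η) ^ 2 := one_le_pow₀ (one_le_kappa _)
    have htd : 0 ≤ t ^ (-(ηt - η)) := Real.rpow_nonneg ht.le _
    have hK1 : (1:ℝ) ≤ K := by nlinarith
    set f : ℝ → ℝ := fun x => |y x| * (1+x) ^ (η/2) with hfdef
    set g : ℝ → ℝ := fun x => Real.exp (-(t*x)) * (1+x) ^ (-(η/2)) with hgdef
    have hfm : Measurable f := by fun_prop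
    have hgm : Measurable g := by fun_prop
    have hfsq : ∀ x : ℝ, x ∈ Set.Ioi 0 → f x ^ 2 = y x ^ 2 * (1+x) ^ η := by
      intro x hx
      have h1x : (0:ℝ) < 1 + x := by simp only [Set.mem_Ioi] at hx; linarith
      simp only [hfdef, mul_pow, sq_abs]
      rw [← Real.rpow_natCast ((1+x) ^ (η/2)) 2, ← Real.rpow_mul h1x.le]
      norm_num
    have hgsq : ∀ x : ℝ, x ∈ Set.Ioi 0 →
        g x ^ 2 = Real.exp (-(2*t*x)) * (1+x) ^ (-η) := by
      intro x hx
      have h1x : (0:ℝ) < 1 + x := by simp only [Set.mem_Ioi] at hx; linarith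
      simp only [hgdef, mul_pow]
      rw [← Real.rpow_natCast ((1+x) ^ (-(η/2))) 2, ← Real.rpow_mul h1x.le, sq, ← Real.exp_add]
      have e1 : -(t*x) + -(t*x) = -(2*t*x) := by ring
      have e2 : -(η/2) * (2:ℕ) = -η := by push_cast; ring
      rw [e1, e2]
    have hf2 : Integrable (fun x => f x ^ 2) (μ.restrict (Set.Ioi 0)) := by
      refine hN.congr ?_
      filter_upwards [hmem] with x hx
      exact (hfsq x hx).symm
    have hptg : ∀ x : ℝ, x ∈ Set.Ioi 0 →
        Real.exp (-(2*t*x)) * (1+x) ^ (-η) ≤ K * (1+x) ^ (-ηt) := by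
      intro x hx
      have hx0 : (0:ℝ) < x := hx
      have h1x : (0:ℝ) < 1 + x := by linarith
      have hsplit : (1+x : ℝ) ^ (-η) = (1+x) ^ (ηt - η) * (1+x) ^ (-ηt) := by
        rw [← Real.rpow_add h1x]; congr 1; ring
      calc Real.exp (-(2*t*x)) * (1+x) ^ (-η)
          = (Real.exp (-(2*t*x)) * (1+x) ^ (ηt - η)) * (1+x) ^ (-ηt) := by
            rw [hsplit]; ring
        _ ≤ K * (1+x) ^ (-ηt) :=
            mul_le_mul_of_nonneg_right (ptwise_core hδ ht hx0.le)
              (Real.rpow_nonneg h1x.le _)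
    have hg2 : Integrable (fun x => g x ^ 2) (μ.restrict (Set.Ioi 0)) := by
      refine Integrable.mono' (hI.const_mul K) ?_ ?_
      · exact (hgm.pow_const 2).aestronglyMeasurable
      · filter_upwards [hmem] with x hx
        rw [Real.norm_eq_abs, abs_of_nonneg (sq_nonneg _), hgsq x hx]
        exact hptg x hx
    set B : ℝ := ∫ x in Set.Ioi 0, g x ^ 2 ∂μ with hBdef
    have hB0 : 0 ≤ B :=
      setIntegral_nonneg measurableSet_Ioi (fun x _ => sq_nonneg _)
    have hB_le : B ≤ K * I := by
      calc B ≤ ∫ x in Set.Ioi 0, K * (1+x) ^ (-ηt) ∂μ := by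
            refine integral_mono_of_nonneg ?_ (hI.const_mul K) ?_
            · filter_upwards with x; exact sq_nonneg _
            · filter_upwards [hmem] with x hx
              rw [hgsq x hx]; exact hptg x hx
        _ = K * I := by rw [integral_const_mul]
    have hpq : Real.HolderConjugate 2 2 := Real.holderConjugate_iff.mpr ⟨one_lt_two, by norm_num⟩
    have hfmem : MemLp f (ENNReal.ofReal 2) (μ.restrict (Set.Ioi 0)) := by
      rw [(by norm_num : ENNReal.ofReal (2:ℝ) = 2)]
      exact (memLp_two_iff_integrable_sq hfm.aestronglyMeasurable).mpr hf2
    have hgmem : MemLp g (ENNReal.ofReal 2) (μ.restrict (Set.Ioi 0)) := by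
      rw [(by norm_num : ENNReal.ofReal (2:ℝ) = 2)]
      exact (memLp_two_iff_integrable_sq hgm.aestronglyMeasurable).mpr hg2
    have hfnn : 0 ≤ᵐ[μ.restrict (Set.Ioi 0)] f := by
      filter_upwards [hmem] with x hx
      have h1x : (0:ℝ) ≤ 1 + x := by simp only [Set.mem_Ioi] at hx; linarith
      exact mul_nonneg (abs_nonneg _) (Real.rpow_nonneg h1x _)
    have hgnn : 0 ≤ᵐ[μ.restrict (Set.Ioi 0)] g := by
      filter_upwards [hmem] with x hx
      have h1x : (0:ℝ) ≤ 1 + x := by simp only [Set.mem_Ioi] at hx; linarith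
      exact mul_nonneg (Real.exp_pos _).le (Real.rpow_nonneg h1x _)
    have hHolder := integral_mul_le_Lp_mul_Lq_of_nonneg hpq hfnn hgnn hfmem hgmem
    have hfA : ∫ x in Set.Ioi 0, f x ^ (2:ℝ) ∂μ = A := by
      rw [hAdef]
      refine integral_congr_ae ?_
      filter_upwards [hmem] with x hx
      rw [Real.rpow_two, hfsq x hx]
    have hgB : ∫ x in Set.Ioi 0, g x ^ (2:ℝ) ∂μ = B := by
      rw [hBdef]
      exact integral_congr_ae (by filter_upwards with x; rw [Real.rpow_two])
    have hc : |∫ x in Set.Ioi 0, Real.exp (-(t * x)) * y x ∂μ| ≤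
        Real.sqrt A * Real.sqrt B := by
      calc |∫ x in Set.Ioi 0, Real.exp (-(t * x)) * y x ∂μ|
          ≤ ∫ x in Set.Ioi 0, |Real.exp (-(t * x)) * y x| ∂μ := by
            rw [← Real.norm_eq_abs]
            refine (norm_integral_le_integral_norm _).trans_eq
              (integral_congr_ae ?_)
            filter_upwards with x
            simp [Real.norm_eq_abs, abs_mul, Real.abs_exp]
        _ = ∫ x in Set.Ioi 0, f x * g x ∂μ := by
            refine integral_congr_ae ?_
            filter_upwards [hmem] with x hx
            have h1x : (0:ℝ) < 1 + x := by simp only [Set.mem_Ioi] at hx; linarith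
            have hone : (1+x:ℝ) ^ (η/2) * (1+x) ^ (-(η/2)) = 1 := by
              rw [← Real.rpow_add h1x]; norm_num
            have e : f x * g x =
                Real.exp (-(t*x)) * |y x| * ((1+x) ^ (η/2) * (1+x) ^ (-(η/2))) := by
              simp only [hfdef, hgdef]; ring
            rw [abs_mul, Real.abs_exp, e, hone, mul_one]
        _ ≤ (∫ x in Set.Ioi 0, f x ^ (2:ℝ) ∂μ) ^ (1/(2:ℝ)) *
              (∫ x in Set.Ioi 0, g x ^ (2:ℝ) ∂μ) ^ (1/(2:ℝ)) := hHolder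
        _ = Real.sqrt A * Real.sqrt B := by
            rw [hfA, hgB, ← Real.sqrt_eq_rpow, ← Real.sqrt_eq_rpow]
    -- final algebra
    set a : ℝ := y 0
    set c : ℝ := ∫ x in Set.Ioi 0, Real.exp (-(t * x)) * y x ∂μ
    have hsA : Real.sqrt A ^ 2 = A := Real.sq_sqrt hA0
    have hsB : Real.sqrt B ^ 2 = B := Real.sq_sqrt hB0
    have hsA0 : 0 ≤ Real.sqrt A := Real.sqrt_nonneg _
    have hsB0 : 0 ≤ Real.sqrt B := Real.sqrt_nonneg _
    have h1 : |a + c| ^ 2 ≤ (|a| + Real.sqrt A * Real.sqrt B) ^ 2 := by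
      apply pow_le_pow_left₀ (abs_nonneg _)
      calc |a + c| ≤ |a| + |c| := abs_add_le a c
        _ ≤ |a| + Real.sqrt A * Real.sqrt B := by linarith
    have h2 : (|a| + Real.sqrt A * Real.sqrt B) ^ 2 ≤ (a ^ 2 + A) * (1 + B) := by
      nlinarith [sq_nonneg (|a| * Real.sqrt B - Real.sqrt A), sq_abs a, abs_nonneg a]
    have h3 : (a ^ 2 + A) * (1 + B) ≤ (a ^ 2 + A) * (K * (1 + I)) := by
      apply mul_le_mul_of_nonneg_left ?_ (by positivity)
      nlinarith
    calc |a + c| ^ 2 ≤ (a ^ 2 + A) * (1 + B) := h1.trans h2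
      _ ≤ (a ^ 2 + A) * (K * (1 + I)) := h3
      _ = (1 + I) * kappa (ηt - η) ^ 2 * (1 + t ^ (-(ηt - η))) * (a ^ 2 + A) := by
          rw [hKdef]; ring
  refine ⟨main, ?_⟩
  intro T hT
  set M : ℝ := (1 + I) * kappa (ηt - η) ^ 2 * (1 + T ^ (ηt - η)) * (y 0 ^ 2 + A) with hMdef
  have hκ1 : (1:ℝ) ≤ kappa (ηt - η) ^ 2 := one_le_pow₀ (one_le_kappa _)
  have hTd : 0 ≤ T ^ (ηt - η) := Real.rpow_nonneg hT.le _
  have hM0 : 0 ≤ M := by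
    apply mul_nonneg (mul_nonneg (mul_nonneg (by linarith) (by positivity)) (by linarith))
    positivity
  refine ⟨Real.sqrt M, ?_⟩
  rintro t ⟨ht0, htT⟩
  have htd0 : 0 ≤ t ^ (-(ηt - η)) := Real.rpow_nonneg ht0.le _
  have hkey : (1:ℝ) ≤ T ^ (ηt - η) * t ^ (-(ηt - η)) := by
    have h1 : (1:ℝ) ≤ (T / t) ^ (ηt - η) :=
      Real.one_le_rpow ((one_le_div ht0).mpr htT) hδ.le
    have h2 : (T / t : ℝ) ^ (ηt - η) = T ^ (ηt - η) * t ^ (-(ηt - η)) := by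
      rw [div_eq_mul_inv, Real.mul_rpow hT.le (inv_nonneg.mpr ht0.le),
        Real.inv_rpow ht0.le, ← Real.rpow_neg ht0.le]
    linarith [h2 ▸ h1]
  have hmono : (1 + I) * kappa (ηt - η) ^ 2 * (1 + t ^ (-(ηt - η))) * (y 0 ^ 2 + A) ≤
      M * t ^ (-(ηt - η)) := by
    have hstep : 1 + t ^ (-(ηt - η)) ≤ (1 + T ^ (ηt - η)) * t ^ (-(ηt - η)) := by nlinarith
    have hc0 : 0 ≤ (1 + I) * kappa (ηt - η) ^ 2 := by positivity
    have := mul_le_mul_of_nonneg_right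
      (mul_le_mul_of_nonneg_left hstep hc0)
      (by positivity : (0:ℝ) ≤ y 0 ^ 2 + A)
    calc (1 + I) * kappa (ηt - η) ^ 2 * (1 + t ^ (-(ηt - η))) * (y 0 ^ 2 + A)
        ≤ (1 + I) * kappa (ηt - η) ^ 2 * ((1 + T ^ (ηt - η)) * t ^ (-(ηt - η))) *
            (y 0 ^ 2 + A) := this
      _ = M * t ^ (-(ηt - η)) := by rw [hMdef]; ring
  have hsqrt_t : Real.sqrt (t ^ (-(ηt - η))) = t ^ (-(ηt - η) / 2) := by
    rw [Real.sqrt_eq_rpow, ← Real.rpow_mul ht0.le]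
    congr 1
    ring
  calc |y 0 + ∫ x in Set.Ioi 0, Real.exp (-(t * x)) * y x ∂μ|
      = Real.sqrt (|y 0 + ∫ x in Set.Ioi 0, Real.exp (-(t * x)) * y x ∂μ| ^ 2) :=
        (Real.sqrt_sq (abs_nonneg _)).symm
    _ ≤ Real.sqrt (M * t ^ (-(ηt - η))) :=
        Real.sqrt_le_sqrt ((main t ht0).trans hmono)
    _ = Real.sqrt M * t ^ (-(ηt - η) / 2) := by
        rw [Real.sqrt_mul hM0, hsqrt_t]
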